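/- Let λ ∈ ℂ with λ ≠ 0. For d1, d2 ∈ ℕ define c d1 d2 = (1/((2d1+1)!·(2d2+1)!)) · iteratedDeriv (2d2+1) (fun u2 : ℂ => iteratedDeriv (2d1+1) (fun u1 : ℂ => u2^3 * (-2*u1 - 2*u2)^((2*(d1:ℤ)+2*(d2:ℤ)-1)) ) λ) λ, the iterated residue at (u1,u2)=(λ,λ) of u2^3(-2u1-2u2)^{2d1+2d2-1}/((u1-λ)^{2(d1+1)}(u2-λ)^{2(d2+1)}). Then for all z1, z2 ∈ ℂ with |z1| < 1/100 and |z2| < 1/100, HasSum (fun p : ℕ × ℕ => z1^p.1 * z2^p.2 * c p.1 p.2) (((1-4*z1)^2 - 16*z2*(1+z2)) / (4*((1-8*(z1+z2)+16*(z1-z2)^2)))). -/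

import Mathlib

open scoped Nat
open Finset


private lemma evIter {f g : ℂ → ℂ} {x : ℂ} (h : f =ᶠ[nhds x] g) (n : ℕ) :
    iteratedDeriv n f =ᶠ[nhds x] iteratedDeriv n g := by
  induction n with
  | zero => simpa using h
  | succ k ih => simpa only [iteratedDeriv_succ] using ih.deriv

private lemma itd_sum (p q : ℂ) {ι : Type} (s : Finset ι) (C : ι → ℂ) (e : ι → ℤ) :
    ∀ (k : ℕ) (u : ℂ), p*u+q ≠ 0 →
    iteratedDeriv k (fun x : ℂ => ∑ i ∈ s, C i * (p*x+q)^(e i)) u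
      = ∑ i ∈ s, C i * p^k * (∏ j ∈ range k, ((e i : ℂ) - j)) * (p*u+q)^(e i - k) := by
  intro k
  induction k with
  | zero => intro u hu; simp
  | succ k IH =>
    intro u hu
    have hcont : Continuous fun x : ℂ => p*x+q := by continuity
    have hopen : IsOpen {x : ℂ | p*x+q ≠ 0} := isOpen_compl_singleton.preimage hcont
    have hev : iteratedDeriv k (fun x : ℂ => ∑ i ∈ s, C i * (p*x+q)^(e i))
        =ᶠ[nhds u] fun x => ∑ i ∈ s, C i * p^k * (∏ j ∈ range k, ((e i : ℂ) - j)) * (p*x+q)^(e i - k) :=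
      Filter.eventually_of_mem (hopen.mem_nhds hu) (fun x hx => IH x hx)
    rw [iteratedDeriv_succ, hev.deriv_eq]
    have hlin : HasDerivAt (fun x : ℂ => p*x+q) p u := by
      simpa using ((hasDerivAt_id u).const_mul p).add_const q
    have hD : HasDerivAt (fun x : ℂ => ∑ i ∈ s, C i * p^k * (∏ j ∈ range k, ((e i : ℂ) - j)) * (p*x+q)^(e i - k))
        (∑ i ∈ s, C i * p^k * (∏ j ∈ range k, ((e i : ℂ) - j)) *
          (((e i - k : ℤ) : ℂ) * (p*u+q)^(e i - k - 1) * p)) u := by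
      refine HasDerivAt.fun_sum (fun i _ => ?_)
      exact (((hasDerivAt_zpow (e i - k) (p*u+q) (Or.inl hu)).comp u hlin).const_mul _)
    rw [hD.deriv]
    refine Finset.sum_congr rfl (fun i _ => ?_)
    rw [Finset.prod_range_succ]
    have h1 : ((e i - k : ℤ) : ℂ) = (e i : ℂ) - k := by push_cast; ring
    have h2 : e i - k - 1 = e i - (k+1 : ℕ) := by push_cast; ring
    rw [h1, h2]
    ring

private lemma itd_one (p q A : ℂ) (m : ℤ) (k : ℕ) (u : ℂ) (hu : p*u+q ≠ 0) :
    iteratedDeriv k (fun x : ℂ => A * (p*x+q)^m) u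
      = A * p^k * (∏ j ∈ range k, ((m : ℂ) - j)) * (p*u+q)^(m - k) := by
  simpa using itd_sum p q ({0} : Finset ℕ) (fun _ => A) (fun _ => m) k u hu

private noncomputable def cf (Λ K : ℂ) : ℕ → ℂ := fun i =>
  if i = 0 then -K*Λ^3 else if i = 1 then -(3/2)*K*Λ^2 else if i = 2 then -(3/4)*K*Λ else -K/8

private lemma c_master (Λ : ℂ) (hΛ : Λ ≠ 0) (d1 d2 : ℕ) :
    iteratedDeriv (2*d2+1) (fun u2 : ℂ =>
        iteratedDeriv (2*d1+1) (fun u1 : ℂ =>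
          u2^3 * ((-2*u1 - 2*u2)^(2*(d1:ℤ)+2*(d2:ℤ)-1))) Λ) Λ
    = ∑ i ∈ range 4,
        cf Λ ((-2)^(2*d1+1) * ∏ j ∈ range (2*d1+1), (((2*(d1:ℤ)+2*(d2:ℤ)-1 : ℤ) : ℂ) - j)) i
        * (-2)^(2*d2+1)
        * (∏ j ∈ range (2*d2+1), (((2*(d2:ℤ)-2 + (i:ℤ) : ℤ) : ℂ) - j))
        * ((-2)*Λ + (-(2*Λ)))^(2*(d2:ℤ)-2 + (i:ℤ) - (2*d2+1 : ℕ)) := by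
  set m : ℤ := 2*(d1:ℤ)+2*(d2:ℤ)-1 with hm
  set a : ℕ := 2*d1+1 with ha
  set b : ℕ := 2*d2+1 with hb
  set n : ℤ := 2*(d2:ℤ)-2 with hn
  set K : ℂ := (-2)^a * ∏ j ∈ range a, ((m : ℂ) - j) with hK
  have hma : m - (a:ℤ) = n := by rw [hm, ha, hn]; push_cast; ring
  have h4Λ : (-2)*Λ + (-(2*Λ)) ≠ 0 := by
    intro h; exact hΛ (by linear_combination (-1/4)*h)
  have hg : ∀ u2 : ℂ, u2 ≠ -Λ →
      iteratedDeriv a (fun u1 : ℂ => u2^3 * ((-2*u1 - 2*u2)^m)) Λ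
        = u2^3 * K * ((-2)*u2 + (-(2*Λ)))^n := by
    intro u2 h
    have hfun : (fun u1 : ℂ => u2^3 * ((-2*u1 - 2*u2)^m))
        = fun u1 => u2^3 * (((-2)*u1 + (-(2*u2)))^m) := by
      funext x
      rw [show (-2*x - 2*u2 : ℂ) = ((-2)*x + (-(2*u2))) from by ring]
    have hnz : (-2)*Λ + (-(2*u2)) ≠ 0 := by
      intro hc; exact h (by linear_combination (-1/2)*hc)
    rw [hfun, itd_one (-2) (-(2*u2)) (u2^3) m a Λ hnz]
    rw [show ((-2)*Λ + (-(2*u2))) = ((-2)*u2 + (-(2*Λ))) from by ring, hma, hK]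
    ring
  have hΛne : Λ ≠ -Λ := by
    intro h; exact hΛ (by linear_combination (1/2)*h)
  have hev : (fun u2 : ℂ => iteratedDeriv a (fun u1 : ℂ => u2^3 * ((-2*u1 - 2*u2)^m)) Λ)
      =ᶠ[nhds Λ] (fun u2 : ℂ => ∑ i ∈ range 4, cf Λ K i * ((-2)*u2 + (-(2*Λ)))^(n + (i:ℤ))) := by
    have hopen : IsOpen {u2 : ℂ | u2 ≠ -Λ} := isOpen_ne
    filter_upwards [hopen.mem_nhds hΛne] with u2 hu2
    rw [hg u2 hu2]
    have hw : (-2)*u2 + (-(2*Λ)) ≠ 0 := by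
      intro hc; exact hu2 (by linear_combination (-1/2)*hc)
    have hz : ∀ j : ℕ, ((-2)*u2 + (-(2*Λ)))^(n + (j:ℤ))
        = ((-2)*u2 + (-(2*Λ)))^n * ((-2)*u2 + (-(2*Λ)))^j := fun j => by
      rw [zpow_add₀ hw, zpow_natCast]
    rw [Finset.sum_range_succ, Finset.sum_range_succ, Finset.sum_range_succ,
      Finset.sum_range_succ, Finset.sum_range_zero, hz 0, hz 1, hz 2, hz 3]
    have c0 : cf Λ K 0 = -K*Λ^3 := rfl
    have c1 : cf Λ K 1 = -(3/2)*K*Λ^2 := rfl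
    have c2 : cf Λ K 2 = -(3/4)*K*Λ := rfl
    have c3 : cf Λ K 3 = -K/8 := rfl
    rw [c0, c1, c2, c3]
    rw [show (u2^3 * K : ℂ) = -K*Λ^3 + (-(3/2)*K*Λ^2) * ((-2)*u2 + (-(2*Λ)))
      + (-(3/4)*K*Λ) * ((-2)*u2 + (-(2*Λ)))^2 + (-K/8) * ((-2)*u2 + (-(2*Λ)))^3 from by ring]
    ring
  calc iteratedDeriv b (fun u2 : ℂ => iteratedDeriv a (fun u1 : ℂ => u2^3 * ((-2*u1 - 2*u2)^m)) Λ) Λ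
      = iteratedDeriv b (fun u2 : ℂ => ∑ i ∈ range 4, cf Λ K i * ((-2)*u2 + (-(2*Λ)))^(n + (i:ℤ))) Λ :=
        (evIter hev b).eq_of_nhds
    _ = _ := by
        rw [itd_sum (-2) (-(2*Λ)) (range 4) (cf Λ K) (fun i => n + (i:ℤ)) b Λ h4Λ]

private lemma cf_zero (Λ : ℂ) (i : ℕ) : cf Λ 0 i = 0 := by
  unfold cf; split_ifs <;> ring

private lemma prodDesc : ∀ (k M : ℕ), k ≤ M →
    ∏ j ∈ range k, ((M:ℂ) - j) = (M ! : ℂ) / ((M - k)! : ℂ) := by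
  intro k
  induction k with
  | zero =>
    intro M _
    simp [div_self (Nat.cast_ne_zero.2 (Nat.factorial_ne_zero M) : ((M ! : ℕ):ℂ) ≠ 0)]
  | succ k IH =>
    intro M h
    rw [Finset.prod_range_succ, IH M (by omega)]
    have h1 : ((M:ℂ) - k) = ((M - k : ℕ) : ℂ) := by
      rw [Nat.cast_sub (by omega : k ≤ M)]
    have h2 : M - k = (M - (k+1)) + 1 := by omega
    rw [h1, h2, Nat.factorial_succ, Nat.cast_mul]
    have hne1 : (((M - (k+1)) + 1 : ℕ) : ℂ) ≠ 0 := Nat.cast_ne_zero.2 (by omega)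
    have hne2 : (((M - (k+1))! : ℕ) : ℂ) ≠ 0 := Nat.cast_ne_zero.2 (Nat.factorial_ne_zero _)
    generalize (↑(M !) : ℂ) = A
    generalize hB : (((M - (k+1)) + 1 : ℕ) : ℂ) = B at hne1 ⊢
    generalize hC : (((M - (k+1))! : ℕ) : ℂ) = C at hne2 ⊢
    field_simp

section cases
variable (Λ : ℂ) (hΛ : Λ ≠ 0) (c : ℕ → ℕ → ℂ)
variable (hc : ∀ d1 d2 : ℕ, c d1 d2 =
      (1 / (((2*d1+1)! : ℂ) * ((2*d2+1)! : ℂ))) *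
      iteratedDeriv (2*d2+1) (fun u2 : ℂ =>
        iteratedDeriv (2*d1+1) (fun u1 : ℂ =>
          u2^3 * ((-2*u1 - 2*u2)^(2*(d1:ℤ)+2*(d2:ℤ)-1))) Λ) Λ)

include hΛ hc

private lemma c00 : c 0 0 = 1/4 := by
  have hw : (-2)*Λ + (-(2*Λ)) ≠ 0 := by
    intro h; exact hΛ (by linear_combination (-1/4)*h)
  rw [hc 0 0, c_master Λ hΛ 0 0]
  rw [Finset.sum_range_succ, Finset.sum_range_succ, Finset.sum_range_succ,
    Finset.sum_range_succ, Finset.sum_range_zero]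
  norm_num [cf, Finset.prod_range_one]
  rw [show ((-(2*Λ) + -(2*Λ)) : ℂ)^(3:ℕ) = -(64*Λ^3) from by
      ring,
    show ((-(2*Λ) + -(2*Λ)) : ℂ)^(2:ℕ) = 16*Λ^2 from by
      ring]
  have hΛ3 : (Λ:ℂ)^3 ≠ 0 := pow_ne_zero _ hΛ
  have hΛ2 : (Λ:ℂ)^2 ≠ 0 := pow_ne_zero _ hΛ
  field_simp
  ring

private lemma c_left (d1 : ℕ) : c (d1+1) 0 = 0 := by
  rw [hc (d1+1) 0, c_master Λ hΛ (d1+1) 0]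
  have hK0 : (∏ j ∈ range (2*(d1+1)+1), (((2*((d1+1):ℕ)+2*((0:ℕ):ℤ)-1 : ℤ) : ℂ) - j)) = 0 := by
    refine Finset.prod_eq_zero (i := 2*d1+1) (Finset.mem_range.2 (by omega)) ?_
    push_cast
    ring
  rw [hK0]
  simp only [mul_zero, cf_zero, zero_mul, Finset.sum_const_zero, mul_zero]

private lemma c_right (d1 e : ℕ) : c d1 (e+1) =
    -(1/2) * 4^(d1+e+1) * (((2*d1+2*e+1).choose (2*d1+1) : ℕ) : ℂ) := by
  rw [hc d1 (e+1), c_master Λ hΛ d1 (e+1)]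
  rw [Finset.sum_range_succ, Finset.sum_range_succ, Finset.sum_range_succ,
    Finset.sum_range_succ, Finset.sum_range_zero]
  have hQ0 : (∏ j ∈ range (2*(e+1)+1), (((2*((e+1:ℕ):ℤ)-2 + ((0:ℕ):ℤ) : ℤ) : ℂ) - j)) = 0 :=
    Finset.prod_eq_zero (i := 2*e) (Finset.mem_range.2 (by omega)) (by push_cast; ring)
  have hQ1 : (∏ j ∈ range (2*(e+1)+1), (((2*((e+1:ℕ):ℤ)-2 + ((1:ℕ):ℤ) : ℤ) : ℂ) - j)) = 0 :=
    Finset.prod_eq_zero (i := 2*e+1) (Finset.mem_range.2 (by omega)) (by push_cast; ring)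
  have hQ2 : (∏ j ∈ range (2*(e+1)+1), (((2*((e+1:ℕ):ℤ)-2 + ((2:ℕ):ℤ) : ℤ) : ℂ) - j)) = 0 :=
    Finset.prod_eq_zero (i := 2*e+2) (Finset.mem_range.2 (by omega)) (by push_cast; ring)
  have hQ3 : (∏ j ∈ range (2*(e+1)+1), (((2*((e+1:ℕ):ℤ)-2 + ((3:ℕ):ℤ) : ℤ) : ℂ) - j))
      = (((2*(e+1)+1)! : ℕ) : ℂ) := by
    have h1 : ∀ j ∈ range (2*(e+1)+1), (((2*((e+1:ℕ):ℤ)-2 + ((3:ℕ):ℤ) : ℤ) : ℂ) - j)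
        = (((2*(e+1)+1 : ℕ) : ℂ) - j) := by intro j _; push_cast; ring
    rw [Finset.prod_congr rfl h1, prodDesc (2*(e+1)+1) (2*(e+1)+1) le_rfl]
    simp
  have hPa : (∏ j ∈ range (2*d1+1), (((2*(d1:ℤ)+2*((e+1:ℕ):ℤ)-1 : ℤ) : ℂ) - j))
      = (((2*d1+2*e+1)! : ℕ) : ℂ) / (((2*e)! : ℕ) : ℂ) := by
    have h1 : ∀ j ∈ range (2*d1+1), (((2*(d1:ℤ)+2*((e+1:ℕ):ℤ)-1 : ℤ) : ℂ) - j)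
        = (((2*d1+2*e+1 : ℕ) : ℂ) - j) := by intro j _; push_cast; ring
    rw [Finset.prod_congr rfl h1, prodDesc (2*d1+1) (2*d1+2*e+1) (by omega),
      show 2*d1+2*e+1-(2*d1+1) = 2*e from by omega]
  have hE3 : (2*((e+1:ℕ):ℤ)-2 + ((3:ℕ):ℤ) - ((2*(e+1)+1 : ℕ) : ℤ)) = 0 := by push_cast; ring
  rw [hQ0, hQ1, hQ2, hQ3, hPa, hE3]
  simp only [mul_zero, zero_mul, add_zero, zero_add, zpow_zero, mul_one]
  have c3 : ∀ K : ℂ, cf Λ K 3 = -K/8 := fun _ => rfl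
  rw [c3, Nat.cast_choose ℂ (show 2*d1+1 ≤ 2*d1+2*e+1 by omega),
    show 2*d1+2*e+1-(2*d1+1) = 2*e from by omega,
    Odd.neg_pow (⟨d1, by ring⟩ : Odd (2*d1+1)) (2:ℂ),
    Odd.neg_pow (⟨e+1, by ring⟩ : Odd (2*(e+1)+1)) (2:ℂ)]
  have f1 : (((2*d1+1)! : ℕ) : ℂ) ≠ 0 := Nat.cast_ne_zero.2 (Nat.factorial_ne_zero _)
  have f2 : (((2*(e+1)+1)! : ℕ) : ℂ) ≠ 0 := Nat.cast_ne_zero.2 (Nat.factorial_ne_zero _)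
  have f3 : (((2*e)! : ℕ) : ℂ) ≠ 0 := Nat.cast_ne_zero.2 (Nat.factorial_ne_zero _)
  rw [show ((4:ℂ))^(d1+e+1) = 2^(2*d1) * 2^(2*e) * 4 from by
    rw [show ((4:ℂ)) = 2^2 from by norm_num, ← pow_mul]; ring]
  field_simp
  ring

end cases

private lemma choose_le_2pow (n k : ℕ) : n.choose k ≤ 2^n := by
  rcases le_or_gt k n with h | h
  · calc n.choose k ≤ ∑ m ∈ range (n+1), n.choose m :=
        Finset.single_le_sum (f := fun m => n.choose m)
          (fun _ _ => Nat.zero_le _) (Finset.mem_range.2 (by omega))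
    _ = 2^n := Nat.sum_range_choose n
  · simp [Nat.choose_eq_zero_of_lt h]

private lemma row_sum (k : ℕ) {t : ℂ} (ht : ‖t‖ < 1) :
    HasSum (fun e : ℕ => (((2*e + k).choose k : ℕ) : ℂ) * (t^2)^e)
      ((1/(1-t)^(k+1) + 1/(1+t)^(k+1))/2) := by
  have H1 := hasSum_choose_mul_geometric_of_norm_lt_one (𝕜 := ℂ) k ht
  have ht' : ‖-t‖ < 1 := by simpa using ht
  have H2 := hasSum_choose_mul_geometric_of_norm_lt_one (𝕜 := ℂ) k ht'
  rw [sub_neg_eq_add] at H2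
  have H3 := H1.add H2
  have hinj : Function.Injective (fun e : ℕ => 2*e) := fun a b h => by
    dsimp only at h; omega
  have hsupp : ∀ x ∉ Set.range (fun e : ℕ => 2*e),
      ((((x + k).choose k : ℕ) : ℂ) * t^x + (((x + k).choose k : ℕ) : ℂ) * (-t)^x) = 0 := by
    intro x hx
    have hodd : Odd x := by
      rcases Nat.even_or_odd x with hev | hodd
      · obtain ⟨m, hm⟩ := hev
        exact absurd ⟨m, by dsimp only; omega⟩ hx
      · exact hodd
    rw [hodd.neg_pow]; ring
  have H4 := (Function.Injective.hasSum_iff hinj hsupp).2 H3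
  have hfe5 : ((fun x : ℕ => (((x + k).choose k : ℕ) : ℂ) * t^x + (((x + k).choose k : ℕ) : ℂ) * (-t)^x)
      ∘ (fun e : ℕ => 2*e))
      = fun e : ℕ => 2 * ((((2*e + k).choose k : ℕ) : ℂ) * (t^2)^e) := by
    funext e
    simp only [Function.comp]
    rw [Even.neg_pow ⟨e, by ring⟩, ← pow_mul]
    ring
  have H5 : HasSum (fun e : ℕ => 2 * ((((2*e + k).choose k : ℕ) : ℂ) * (t^2)^e))
      (1/(1-t)^(k+1) + 1/(1+t)^(k+1)) := hfe5 ▸ H4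
  have H6 := H5.mul_left (1/2)
  have hfe6 : (fun i : ℕ => 1/2 * (2 * ((((2*i + k).choose k : ℕ) : ℂ) * (t^2)^i)))
      = fun i : ℕ => (((2*i + k).choose k : ℕ) : ℂ) * (t^2)^i := by
    funext i; ring
  rw [show (1/(1-t)^(k+1) + 1/(1+t)^(k+1))/2
    = 1/2 * (1/(1-t)^(k+1) + 1/(1+t)^(k+1)) from by ring]
  exact hfe6 ▸ H6

private lemma main_sum {x y : ℂ} (hx : ‖x‖ < 1/25) (hy : ‖y‖ < 1/25) :
    HasSum (fun p : ℕ × ℕ => (((2*p.1 + 2*p.2 + 1).choose (2*p.1+1) : ℕ) : ℂ) * x^p.1 * y^p.2)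
      ((1 + y - x)/((1-x-y)^2 - 4*(x*y))) := by
  obtain ⟨t, ht2⟩ : ∃ t : ℂ, t^2 = y := IsAlgClosed.exists_pow_nat_eq y (by norm_num : 0 < 2)
  have hts : ‖t‖^2 < (1/5)^2 := by
    rw [← norm_pow, ht2]; calc ‖y‖ < 1/25 := hy
    _ = (1/5:ℝ)^2 := by norm_num
  have htn : ‖t‖ < 1/5 := by nlinarith [norm_nonneg t]
  have ht1 : ‖t‖ < 1 := lt_trans htn (by norm_num)
  have hnorm1 : (1:ℝ) - ‖t‖ ≤ ‖1 - t‖ := by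
    simpa using norm_sub_norm_le (1:ℂ) t
  have hnorm2 : (1:ℝ) - ‖t‖ ≤ ‖1 + t‖ := by
    have := norm_sub_norm_le (1:ℂ) (-t)
    simpa [sub_neg_eq_add] using this
  have h1t : (1 - t) ≠ 0 := by
    intro h
    have : ‖(1 - t : ℂ)‖ = 0 := by rw [h]; simp
    nlinarith
  have h2t : (1 + t) ≠ 0 := by
    intro h
    have : ‖(1 + t : ℂ)‖ = 0 := by rw [h]; simp
    nlinarith
  have hu1 : (1 - t)^2 - x ≠ 0 := by
    intro h
    have hx2 : ‖x‖ = ‖(1-t)^2‖ := by rw [show x = (1-t)^2 from by linear_combination -h]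
    rw [norm_pow] at hx2
    nlinarith
  have hu2 : (1 + t)^2 - x ≠ 0 := by
    intro h
    have hx2 : ‖x‖ = ‖(1+t)^2‖ := by rw [show x = (1+t)^2 from by linear_combination -h]
    rw [norm_pow] at hx2
    nlinarith
  have hr1 : ‖x / (1-t)^2‖ < 1 := by
    rw [norm_div, norm_pow]
    rw [div_lt_one (by nlinarith)]
    nlinarith
  have hr2 : ‖x / (1+t)^2‖ < 1 := by
    rw [norm_div, norm_pow]
    rw [div_lt_one (by nlinarith)]
    nlinarith
  have hrow : ∀ d1 : ℕ, HasSum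
      (fun e => (((2*d1 + 2*e + 1).choose (2*d1+1) : ℕ) : ℂ) * x^d1 * y^e)
      (x^d1 * ((1/(1-t)^(2*d1+1+1) + 1/(1+t)^(2*d1+1+1))/2)) := by
    intro d1
    have H := (row_sum (2*d1+1) ht1).mul_left (x^d1)
    have hfe : (fun e : ℕ => (((2*d1+2*e+1).choose (2*d1+1) : ℕ):ℂ) * x^d1 * y^e)
        = fun e => x^d1 * ((((2*e+(2*d1+1)).choose (2*d1+1) : ℕ):ℂ) * (t^2)^e) := by
      funext e
      rw [show 2*d1+2*e+1 = 2*e+(2*d1+1) from by omega, ht2]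
      ring
    rw [hfe]
    exact H
  have G1 := hasSum_geometric_of_norm_lt_one hr1
  have G2 := hasSum_geometric_of_norm_lt_one hr2
  have A1 := G1.mul_left ((1/2) * (1/(1-t)^2))
  have A2 := G2.mul_left ((1/2) * (1/(1+t)^2))
  have A3 := A1.add A2
  have hout : HasSum (fun d : ℕ => x^d * ((1/(1-t)^(2*d+1+1) + 1/(1+t)^(2*d+1+1))/2))
      ((1 + y - x)/((1-x-y)^2 - 4*(x*y))) := by
    have hfun : ∀ d : ℕ, (1/2) * (1/(1-t)^2) * (x/(1-t)^2)^d + (1/2) * (1/(1+t)^2) * (x/(1+t)^2)^d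
        = x^d * ((1/(1-t)^(2*d+1+1) + 1/(1+t)^(2*d+1+1))/2) := by
      intro d
      rw [div_pow, div_pow, ← pow_mul, ← pow_mul,
        show 2*d+1+1 = 2*d+2 from by omega, pow_add (1-t) (2*d) 2, pow_add (1+t) (2*d) 2]
      have p1 : ((1-t):ℂ)^(2*d) ≠ 0 := pow_ne_zero _ h1t
      have p2 : ((1+t):ℂ)^(2*d) ≠ 0 := pow_ne_zero _ h2t
      have p3 : ((1-t):ℂ)^2 ≠ 0 := pow_ne_zero _ h1t
      have p4 : ((1+t):ℂ)^2 ≠ 0 := pow_ne_zero _ h2t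
      field_simp
    have hval : (1/2) * (1/(1-t)^2) * (1 - x/(1-t)^2)⁻¹ + (1/2) * (1/(1+t)^2) * (1 - x/(1+t)^2)⁻¹
        = (1 + y - x)/((1-x-y)^2 - 4*(x*y)) := by
      have hg1 : (1 - x/(1-t)^2) = ((1-t)^2 - x)/(1-t)^2 := by
        field_simp
      have hg2 : (1 - x/(1+t)^2) = ((1+t)^2 - x)/(1+t)^2 := by
        field_simp
      have hΔ : (1-x-y)^2 - 4*(x*y) = ((1-t)^2 - x) * ((1+t)^2 - x) := by
        rw [← ht2]; ring
      rw [hg1, hg2, hΔ, ← ht2]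
      have p3 : ((1-t):ℂ)^2 ≠ 0 := pow_ne_zero _ h1t
      have p4 : ((1+t):ℂ)^2 ≠ 0 := pow_ne_zero _ h2t
      field_simp
      ring
    rw [← hval]
    have hfe := funext hfun
    exact hfe ▸ A3
  have hsum : Summable (fun p : ℕ × ℕ =>
      (((2*p.1 + 2*p.2 + 1).choose (2*p.1+1) : ℕ) : ℂ) * x^p.1 * y^p.2) := by
    have hg : Summable (fun p : ℕ × ℕ => (2*(4/25:ℝ)^p.1) * ((4/25:ℝ)^p.2)) :=
      Summable.mul_of_nonneg (f := fun a : ℕ => 2*(4/25:ℝ)^a) (g := fun b : ℕ => (4/25:ℝ)^b)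
        ((summable_geometric_of_lt_one (by norm_num) (by norm_num)).mul_left 2)
        (summable_geometric_of_lt_one (by norm_num) (by norm_num))
        (fun i => by positivity) (fun i => by positivity)
    apply Summable.of_norm_bounded hg
    intro p
    rw [norm_mul, norm_mul, norm_pow, norm_pow, Complex.norm_natCast]
    calc ((2*p.1+2*p.2+1).choose (2*p.1+1) : ℝ) * ‖x‖^p.1 * ‖y‖^p.2
        ≤ (2^(2*p.1+2*p.2+1) : ℝ) * (1/25)^p.1 * (1/25)^p.2 := by
          have hcc : ((2*p.1+2*p.2+1).choose (2*p.1+1) : ℝ) ≤ (2:ℝ)^(2*p.1+2*p.2+1) := by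
            exact_mod_cast choose_le_2pow (2*p.1+2*p.2+1) (2*p.1+1)
          have hxx : ‖x‖^p.1 ≤ ((1:ℝ)/25)^p.1 := pow_le_pow_left₀ (norm_nonneg _) hx.le _
          have hyy : ‖y‖^p.2 ≤ ((1:ℝ)/25)^p.2 := pow_le_pow_left₀ (norm_nonneg _) hy.le _
          have h1 : (0:ℝ) ≤ ‖x‖^p.1 := by positivity
          have h2 : (0:ℝ) ≤ ‖y‖^p.2 := by positivity
          calc ((2*p.1+2*p.2+1).choose (2*p.1+1) : ℝ) * ‖x‖^p.1 * ‖y‖^p.2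
              ≤ (2:ℝ)^(2*p.1+2*p.2+1) * ((1:ℝ)/25)^p.1 * ((1:ℝ)/25)^p.2 := by
                refine mul_le_mul (mul_le_mul hcc hxx h1 (by positivity)) hyy h2 (by positivity)
            _ = (2:ℝ)^(2*p.1+2*p.2+1) * (1/25)^p.1 * (1/25)^p.2 := by norm_num
      _ = (2*(4/25:ℝ)^p.1) * ((4/25:ℝ)^p.2) := by
          rw [show ((4:ℝ)/25) = 2^2*(1/25) from by norm_num, mul_pow, mul_pow,
            ← pow_mul, ← pow_mul]
          ring
  exact ((Equiv.sigmaEquivProd ℕ ℕ).hasSum_iff).1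
    (HasSum.sigma_of_hasSum hout (fun b => by simpa using hrow b)
      (((Equiv.sigmaEquivProd ℕ ℕ).summable_iff).2 hsum))


theorem stmt12 (Λ : ℂ) (hΛ : Λ ≠ 0) (c : ℕ → ℕ → ℂ)
    (hc : ∀ d1 d2 : ℕ, c d1 d2 =
      (1 / (((2*d1+1)! : ℂ) * ((2*d2+1)! : ℂ))) *
      iteratedDeriv (2*d2+1) (fun u2 : ℂ =>
        iteratedDeriv (2*d1+1) (fun u1 : ℂ =>
          u2^3 * ((-2*u1 - 2*u2)^(2*(d1:ℤ)+2*(d2:ℤ)-1))) Λ) Λ) :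
    ∀ z1 z2 : ℂ, ‖z1‖ < 1/100 → ‖z2‖ < 1/100 →
      HasSum (fun p : ℕ × ℕ => z1^p.1 * z2^p.2 * c p.1 p.2)
        (((1-4*z1)^2 - 16*z2*(1+z2)) / (4*(1 - 8*(z1+z2) + 16*(z1-z2)^2))) := by
  intro z1 z2 hz1 hz2
  have hz1' : ‖z1‖ < 1/100 := hz1
  have hz2' : ‖z2‖ < 1/100 := hz2
  have h8 : ‖8*(z1+z2) - 16*(z1-z2)^2‖ < 1 := by
    have h1 : ‖z1+z2‖ ≤ ‖z1‖+‖z2‖ := norm_add_le _ _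
    have h2 : ‖z1-z2‖ ≤ ‖z1‖+‖z2‖ := norm_sub_le _ _
    calc ‖8*(z1+z2) - 16*(z1-z2)^2‖ ≤ ‖8*(z1+z2)‖ + ‖16*(z1-z2)^2‖ := norm_sub_le _ _
      _ = 8*‖z1+z2‖ + 16*‖z1-z2‖^2 := by
          rw [norm_mul, norm_mul, norm_pow]
          norm_num
      _ < 1 := by nlinarith [norm_nonneg (z1-z2), norm_nonneg (z1+z2)]
  have hΔ : (1 - 8*(z1+z2) + 16*(z1-z2)^2 : ℂ) ≠ 0 := by
    intro h
    have h1 : (1:ℂ) = 8*(z1+z2) - 16*(z1-z2)^2 := by linear_combination h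
    rw [← h1] at h8
    simp at h8
  have h0 : HasSum (fun p : ℕ×ℕ => if p = ((0:ℕ),(0:ℕ)) then (1/4:ℂ) else 0) (1/4) :=
    hasSum_ite_eq _ _
  have hψ : Function.Injective (fun q : ℕ×ℕ => (q.1, q.2+1)) := by
    intro a b h
    have h1 := congrArg Prod.fst h
    have h2 := congrArg Prod.snd h
    dsimp only at h1 h2
    exact Prod.ext h1 (by omega)
  have hψsupp : ∀ p ∉ Set.range (fun q : ℕ×ℕ => (q.1, q.2+1)),
      (if p.2 = 0 then 0 else z1^p.1 * z2^p.2 * c p.1 p.2) = 0 := by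
    intro p hp
    rcases p with ⟨d1, d2⟩
    cases d2 with
    | zero => simp
    | succ e => exact absurd ⟨(d1, e), rfl⟩ hp
  have hx : ‖(4*z1 : ℂ)‖ < 1/25 := by
    rw [norm_mul, Complex.norm_ofNat]
    linarith
  have hy : ‖(4*z2 : ℂ)‖ < 1/25 := by
    rw [norm_mul, Complex.norm_ofNat]
    linarith
  have main := (main_sum hx hy).mul_left (-2*z2)
  have hcomp : ((fun p : ℕ×ℕ => if p.2 = 0 then 0 else z1^p.1 * z2^p.2 * c p.1 p.2)
      ∘ (fun q : ℕ×ℕ => (q.1, q.2+1)))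
      = fun q : ℕ×ℕ => (-2*z2) * ((((2*q.1 + 2*q.2 + 1).choose (2*q.1+1) : ℕ) : ℂ)
          * (4*z1)^q.1 * (4*z2)^q.2) := by
    funext q
    simp only [Function.comp]
    rw [if_neg (Nat.succ_ne_zero _), c_right Λ hΛ c hc q.1 q.2, mul_pow, mul_pow]
    ring
  have h1 : HasSum (fun p : ℕ×ℕ => if p.2 = 0 then 0 else z1^p.1 * z2^p.2 * c p.1 p.2)
      ((-2*z2) * ((1 + 4*z2 - 4*z1)/((1-4*z1-4*z2)^2 - 4*((4*z1)*(4*z2))))) :=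
    (Function.Injective.hasSum_iff hψ hψsupp).1 (hcomp ▸ main)
  have total := h0.add h1
  have hsplit : (fun p : ℕ×ℕ => z1^p.1 * z2^p.2 * c p.1 p.2)
      = fun p : ℕ×ℕ => (if p = ((0:ℕ),(0:ℕ)) then (1/4:ℂ) else 0)
          + (if p.2 = 0 then 0 else z1^p.1 * z2^p.2 * c p.1 p.2) := by
    funext p
    rcases p with ⟨d1, d2⟩
    cases d2 with
    | zero =>
      cases d1 with
      | zero => simp [c00 Λ hΛ c hc]
      | succ d1' => simp [c_left Λ hΛ c hc d1']
    | succ e => simp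
  rw [hsplit]
  have hval : ((1-4*z1)^2 - 16*z2*(1+z2)) / (4*(1 - 8*(z1+z2) + 16*(z1-z2)^2))
      = 1/4 + (-2*z2) * ((1 + 4*z2 - 4*z1)/((1-4*z1-4*z2)^2 - 4*((4*z1)*(4*z2)))) := by
    have hD2 : ((1-4*z1-4*z2)^2 - 4*((4*z1)*(4*z2)) : ℂ)
        = (1 - 8*(z1+z2) + 16*(z1-z2)^2) := by ring
    rw [hD2]
    field_simp
    ring
  rw [hval]
  exact total
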